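/- Let G be a directed partially ordered group, n ≥ 1, and E = Γ(ℤ ⃗× G, (n,0)). Then the pair (ℤ ⃗× G, γ), where γ : E → ℤ ⃗× G is the inclusion, is a universal group for E: γ(E) generates ℤ ⃗× G, and for every group K and every K-valued measure φ : E → K (φ(a+b) = φ(a)+φ(b) whenever a+b exists in E), there exists a unique group homomorphism φ* : ℤ ⃗× G → K with φ = φ* ∘ γ. -/

import Mathlib

/-- A pseudo-effect algebra (PEA): a structure with a partial addition `add`
(with domain of definition `D`), a zero and a one, satisfying (PE1)-(PE4)
together with the (derivable) neutrality of zero. -/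
structure PEA (E : Type) where
  /-- `D a b` means that the partial sum `a + b` is defined. -/
  D : E → E → Prop
  /-- The partial addition (its value is relevant only when `D a b` holds). -/
  add : E → E → E
  zero : E
  one : E
  /-- (PE1), definedness part. -/
  assoc_defined : ∀ a b c, (D a b ∧ D (add a b) c) ↔ (D b c ∧ D a (add b c))
  /-- (PE1), equality part. -/
  assoc_eq : ∀ a b c, D a b → D (add a b) c → add (add a b) c = add a (add b c)
  /-- (PE2), right complement. -/
  compl_right : ∀ a, ∃! d, D a d ∧ add a d = one
  /-- (PE2), left complement. -/
  compl_left : ∀ a, ∃! e, D e a ∧ add e a = one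
  /-- (PE3). -/
  pe3 : ∀ a b, D a b →
    (∃ d, D d a ∧ add d a = add a b) ∧ (∃ e, D b e ∧ add b e = add a b)
  /-- (PE4). -/
  pe4_right : ∀ a, D a one → a = zero
  pe4_left : ∀ a, D one a → a = zero
  D_zero_right : ∀ a, D a zero
  D_zero_left : ∀ a, D zero a
  add_zero : ∀ a, add a zero = a
  zero_add : ∀ a, add zero a = a

namespace PEA

variable {E : Type} (P : PEA E)

/-- The induced partial order: `a ≤ b` iff `a + c = b` for some `c`. -/
def le (a b : E) : Prop := ∃ c, P.D a c ∧ P.add a c = b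

/-- The left complement `a⁻`, the unique element with `a⁻ + a = 1`. -/
noncomputable def lneg (a : E) : E := (P.compl_left a).choose

/-- The right complement `a~`, the unique element with `a + a~ = 1`. -/
noncomputable def rneg (a : E) : E := (P.compl_right a).choose

/-- `E` is weakly commutative if `a + b` is defined iff `b + a` is defined. -/
def WeaklyCommutative : Prop := ∀ a b, P.D a b ↔ P.D b a

/-- `E` is symmetric if the two complements coincide. -/
def Symmetric : Prop := ∀ a, P.lneg a = P.rneg a

/-- A state on a PEA: a `[0,1]`-valued map, additive on existing sums, sending
`0 ↦ 0` and `1 ↦ 1`. -/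
def IsState (s : E → ℝ) : Prop :=
  s P.zero = 0 ∧ s P.one = 1 ∧ (∀ a, 0 ≤ s a ∧ s a ≤ 1) ∧
    ∀ a b, P.D a b → s (P.add a b) = s a + s b

/-- An `(n+1)`-valued discrete state: a state whose range is `{0, 1/n, …, 1}`. -/
def IsDiscreteState (n : ℕ) (s : E → ℝ) : Prop :=
  P.IsState s ∧ Set.range s = {x : ℝ | ∃ i ≤ n, x = (i : ℝ) / n}

/-- An ideal: a nonempty downward closed subset closed under existing sums. -/
def IsIdeal (I : Set E) : Prop :=
  I.Nonempty ∧ (∀ a i, i ∈ I → P.le a i → a ∈ I) ∧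
    ∀ i j, i ∈ I → j ∈ I → P.D i j → P.add i j ∈ I

/-- A normal ideal: `a + i = j + a` implies `i ∈ I ↔ j ∈ I`. -/
def IsNormalIdeal (I : Set E) : Prop :=
  P.IsIdeal I ∧ ∀ a i j, P.D a i → P.D j a → P.add a i = P.add j a → (i ∈ I ↔ j ∈ I)

/-- A maximal ideal: proper and not properly contained in a proper ideal. -/
def IsMaximalIdeal (I : Set E) : Prop :=
  P.IsIdeal I ∧ P.one ∉ I ∧ ∀ J, P.IsIdeal J → P.one ∉ J → I ⊆ J → I = J

/-- `n`-fold partial multiple of an element. -/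
def nmul : ℕ → E → E
  | 0, _ => P.zero
  | k + 1, a => P.add (nmul k a) a

/-- Definedness of the `n`-fold partial multiple. -/
def nmulD : ℕ → E → Prop
  | 0, _ => True
  | k + 1, a => nmulD k a ∧ P.D (P.nmul k a) a

/-- The set of elements of infinite isotropic index. -/
def Infinit : Set E := {a | ∀ k, P.nmulD k a}

/-- An `n`-decomposition of a PEA. -/
def IsNDecomp (n : ℕ) (F : ℕ → Set E) : Prop :=
  (∀ i, i ≤ n → (F i).Nonempty) ∧
  (∀ i j, i ≤ n → j ≤ n → i ≠ j → F i ∩ F j = ∅) ∧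
  ((⋃ i ∈ Set.Iic n, F i) = Set.univ) ∧
  (∀ i, i ≤ n → P.lneg '' F i = F (n - i) ∧ P.rneg '' F i = F (n - i)) ∧
  (∀ i j, i ≤ n → j ≤ n → ∀ x ∈ F i, ∀ y ∈ F j, P.D x y →
     i + j ≤ n ∧ P.add x y ∈ F (i + j))

/-- An `n`-perfect PEA: an `n`-decomposition with all sums `Eᵢ + Eⱼ`, `i+j < n`,
existing, and whose bottom slice is the unique maximal ideal. -/
def IsNPerfect (n : ℕ) (F : ℕ → Set E) : Prop :=
  P.IsNDecomp n F ∧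
  (∀ i j, i + j < n → ∀ x ∈ F i, ∀ y ∈ F j, P.D x y) ∧
  (P.IsMaximalIdeal (F 0) ∧ ∀ J, P.IsMaximalIdeal J → J = F 0)

end PEA

set_option linter.unusedSectionVars false
section IntervalPEA

variable {H : Type} [AddGroup H] [PartialOrder H]
  [CovariantClass H H (· + ·) (· ≤ ·)]
  [CovariantClass H H (Function.swap (· + ·)) (· ≤ ·)]

/-- The carrier of the interval `Γ(H, u) = [0, u]` in a po-group `H`. -/
def GammaSet (u : H) : Type := {x : H // 0 ≤ x ∧ x ≤ u}

namespace GammaInterval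

variable (u : H) (hu : 0 ≤ u)

/-- Definedness of the partial addition of `Γ(H,u)`. -/
def gD (a b : GammaSet u) : Prop := a.1 + b.1 ≤ u

open Classical in
/-- The partial addition of `Γ(H,u)` (junk value `0` outside its domain). -/
noncomputable def gadd (a b : GammaSet u) : GammaSet u :=
  if h : a.1 + b.1 ≤ u then ⟨a.1 + b.1, add_nonneg a.2.1 b.2.1, h⟩
  else ⟨0, le_refl 0, hu⟩

lemma gadd_val {a b : GammaSet u} (h : gD u a b) :
    (gadd u hu a b).1 = a.1 + b.1 := by
  have h' : a.1 + b.1 ≤ u := h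
  unfold gadd
  first
    | exact congrArg (fun z : {x : H // 0 ≤ x ∧ x ≤ u} => z.1) (dif_pos h')
    | simp [h']

/-- The interval `Γ(H, u)` as a pseudo-effect algebra. -/
noncomputable def Gamma : PEA (GammaSet u) where
  D := gD u
  add := gadd u hu
  zero := ⟨0, le_refl 0, hu⟩
  one := ⟨u, hu, le_refl u⟩
  assoc_defined := by
    intro a b c
    constructor
    · rintro ⟨h1, h2⟩
      have h2a : (gadd u hu a b).1 + c.1 ≤ u := h2
      have h2' : a.1 + b.1 + c.1 ≤ u := by rwa [gadd_val u hu h1] at h2a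
      have h3 : a.1 + (b.1 + c.1) ≤ u := by rwa [← add_assoc]
      have hbc : gD u b c := le_trans (le_add_of_nonneg_left a.2.1) h3
      refine ⟨hbc, ?_⟩
      show a.1 + (gadd u hu b c).1 ≤ u
      rwa [gadd_val u hu hbc]
    · rintro ⟨h1, h2⟩
      have h2a : a.1 + (gadd u hu b c).1 ≤ u := h2
      have h2' : a.1 + (b.1 + c.1) ≤ u := by rwa [gadd_val u hu h1] at h2a
      have hab : gD u a b :=
        le_trans (add_le_add_right (le_add_of_nonneg_right c.2.1) a.1) h2'
      refine ⟨hab, ?_⟩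
      show (gadd u hu a b).1 + c.1 ≤ u
      rw [gadd_val u hu hab, add_assoc]
      exact h2'
  assoc_eq := by
    intro a b c h1 h2
    have h2' : a.1 + b.1 + c.1 ≤ u := by
      have h2a : (gadd u hu a b).1 + c.1 ≤ u := h2
      rwa [gadd_val u hu h1] at h2a
    have h3 : a.1 + (b.1 + c.1) ≤ u := by rwa [← add_assoc]
    have hbc : gD u b c := le_trans (le_add_of_nonneg_left a.2.1) h3
    have habc : gD u a (gadd u hu b c) := by
      show a.1 + (gadd u hu b c).1 ≤ u
      rwa [gadd_val u hu hbc]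
    apply Subtype.ext
    rw [gadd_val u hu h2, gadd_val u hu h1, gadd_val u hu habc, gadd_val u hu hbc,
      add_assoc]
  compl_right := by
    intro a
    have h1 : (0 : H) ≤ -a.1 + u := by
      rw [le_neg_add_iff_add_le, add_zero]; exact a.2.2
    have h2 : -a.1 + u ≤ u := by
      simpa using add_le_add_right (neg_nonpos.mpr a.2.1) u
    have hD : gD u a ⟨-a.1 + u, h1, h2⟩ := by
      show a.1 + (-a.1 + u) ≤ u
      rw [add_neg_cancel_left]
    refine ⟨⟨-a.1 + u, h1, h2⟩, ⟨hD, ?_⟩, ?_⟩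
    · apply Subtype.ext
      rw [gadd_val u hu hD]
      exact add_neg_cancel_left a.1 u
    · rintro y ⟨hy1, hy2⟩
      apply Subtype.ext
      have hv := congrArg Subtype.val hy2
      rw [gadd_val u hu hy1] at hv
      show y.1 = -a.1 + u
      rw [eq_neg_add_iff_add_eq]
      exact hv
  compl_left := by
    intro a
    have h1 : (0 : H) ≤ u + -a.1 := by
      simpa using add_le_add_right a.2.2 (-a.1)
    have h2 : u + -a.1 ≤ u := by
      simpa using add_le_add_left (neg_nonpos.mpr a.2.1) u
    have hD : gD u ⟨u + -a.1, h1, h2⟩ a := by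
      show (u + -a.1) + a.1 ≤ u
      rw [neg_add_cancel_right]
    refine ⟨⟨u + -a.1, h1, h2⟩, ⟨hD, ?_⟩, ?_⟩
    · apply Subtype.ext
      rw [gadd_val u hu hD]
      exact neg_add_cancel_right u a.1
    · rintro y ⟨hy1, hy2⟩
      apply Subtype.ext
      have hv := congrArg Subtype.val hy2
      rw [gadd_val u hu hy1] at hv
      show y.1 = u + -a.1
      rw [eq_add_neg_iff_add_eq]
      exact hv
  pe3 := by
    intro a b h
    constructor
    · have h1 : (0 : H) ≤ a.1 + b.1 + -a.1 := by
        have : a.1 + 0 + -a.1 ≤ a.1 + b.1 + -a.1 :=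
          add_le_add_left (add_le_add_right b.2.1 a.1) (-a.1)
        simpa using this
      have h2 : a.1 + b.1 + -a.1 ≤ u := by
        calc a.1 + b.1 + -a.1 ≤ u + -a.1 := add_le_add_left h (-a.1)
          _ ≤ u + 0 := add_le_add_right (neg_nonpos.mpr a.2.1) u
          _ = u := add_zero u
      have hD : gD u ⟨a.1 + b.1 + -a.1, h1, h2⟩ a := by
        show (a.1 + b.1 + -a.1) + a.1 ≤ u
        rw [neg_add_cancel_right]
        exact h
      refine ⟨⟨a.1 + b.1 + -a.1, h1, h2⟩, hD, ?_⟩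
      apply Subtype.ext
      rw [gadd_val u hu hD, gadd_val u hu h]
      exact neg_add_cancel_right (a.1 + b.1) a.1
    · have h1 : (0 : H) ≤ -b.1 + (a.1 + b.1) := by
        have : -b.1 + b.1 ≤ -b.1 + (a.1 + b.1) :=
          add_le_add_right (le_add_of_nonneg_left a.2.1) (-b.1)
        simpa using this
      have h2 : -b.1 + (a.1 + b.1) ≤ u := by
        calc -b.1 + (a.1 + b.1) ≤ -b.1 + u := add_le_add_right h (-b.1)
          _ ≤ 0 + u := add_le_add_left (neg_nonpos.mpr b.2.1) u
          _ = u := zero_add u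
      have hD : gD u b ⟨-b.1 + (a.1 + b.1), h1, h2⟩ := by
        show b.1 + (-b.1 + (a.1 + b.1)) ≤ u
        rw [add_neg_cancel_left]
        exact h
      refine ⟨⟨-b.1 + (a.1 + b.1), h1, h2⟩, hD, ?_⟩
      apply Subtype.ext
      rw [gadd_val u hu hD, gadd_val u hu h]
      exact add_neg_cancel_left b.1 (a.1 + b.1)
  pe4_right := by
    intro a h
    apply Subtype.ext
    have h' : a.1 + u ≤ u := h
    have h'' : a.1 + u + -u ≤ u + -u := add_le_add_left h' (-u)
    simp only [add_neg_cancel_right, add_neg_cancel] at h''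
    exact le_antisymm h'' a.2.1
  pe4_left := by
    intro a h
    apply Subtype.ext
    have h' : u + a.1 ≤ u := h
    have h'' : -u + (u + a.1) ≤ -u + u := add_le_add_right h' (-u)
    simp only [neg_add_cancel_left, neg_add_cancel] at h''
    exact le_antisymm h'' a.2.1
  D_zero_right := by
    intro a
    show a.1 + 0 ≤ u
    simpa using a.2.2
  D_zero_left := by
    intro a
    show 0 + a.1 ≤ u
    simpa using a.2.2
  add_zero := by
    intro a
    apply Subtype.ext
    have h : gD u a ⟨0, le_refl 0, hu⟩ := by
      show a.1 + 0 ≤ u; simpa using a.2.2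
    rw [gadd_val u hu h]
    exact add_zero a.1
  zero_add := by
    intro a
    apply Subtype.ext
    have h : gD u ⟨0, le_refl 0, hu⟩ a := by
      show 0 + a.1 ≤ u; simpa using a.2.2
    rw [gadd_val u hu h]
    exact zero_add a.1

end GammaInterval

end IntervalPEA

section ZLexSection

/-- The lexicographic product `ℤ ⃗× G`. -/
def ZLex (G : Type) : Type := ℤ × G

namespace ZLex

variable {G : Type} [AddGroup G] [PartialOrder G]
  [CovariantClass G G (· + ·) (· ≤ ·)]
  [CovariantClass G G (Function.swap (· + ·)) (· ≤ ·)]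

instance : AddGroup (ZLex G) := inferInstanceAs (AddGroup (ℤ × G))

/-- Build an element of `ℤ ⃗× G`. -/
def mk (i : ℤ) (g : G) : ZLex G := ((i, g) : ℤ × G)

/-- First (integer) component. -/
def idx (x : ZLex G) : ℤ := (x : ℤ × G).1

/-- Second (group) component. -/
def snd (x : ZLex G) : G := (x : ℤ × G).2

instance : PartialOrder (ZLex G) where
  le p q := idx p < idx q ∨ (idx p = idx q ∧ snd p ≤ snd q)
  le_refl p := Or.inr ⟨rfl, le_refl _⟩
  le_trans p q r := by
    rintro (h | ⟨e, h⟩) (h' | ⟨e', h'⟩)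
    · exact Or.inl (lt_trans h h')
    · exact Or.inl (lt_of_lt_of_eq h e')
    · exact Or.inl (lt_of_eq_of_lt e h')
    · exact Or.inr ⟨e.trans e', le_trans h h'⟩
  le_antisymm p q := by
    rintro (h | ⟨e, h⟩) (h' | ⟨e', h'⟩)
    · exact absurd (lt_trans h h') (lt_irrefl _)
    · exact absurd h (by rw [e']; exact lt_irrefl _)
    · exact absurd h' (by rw [e]; exact lt_irrefl _)
    · have h2 : snd p = snd q := le_antisymm h h'
      show ((idx p, snd p) : ℤ × G) = ((idx q, snd q) : ℤ × G)
      rw [e, h2]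

lemma le_def (p q : ZLex G) :
    p ≤ q ↔ idx p < idx q ∨ (idx p = idx q ∧ snd p ≤ snd q) := Iff.rfl

lemma add_def (p q : ZLex G) :
    p + q = mk (idx p + idx q) (snd p + snd q) := rfl

instance : CovariantClass (ZLex G) (ZLex G) (· + ·) (· ≤ ·) := by
  constructor
  rintro c a b (h | ⟨e, h⟩)
  · exact Or.inl (Int.add_lt_add_left h _)
  · exact Or.inr ⟨by show idx c + idx a = idx c + idx b; rw [e],
      add_le_add_right h _⟩

instance : CovariantClass (ZLex G) (ZLex G) (Function.swap (· + ·)) (· ≤ ·) := by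
  constructor
  rintro c a b (h | ⟨e, h⟩)
  · exact Or.inl (Int.add_lt_add_right h _)
  · exact Or.inr ⟨by show idx a + idx c = idx b + idx c; rw [e],
      add_le_add_left h _⟩

end ZLex

end ZLexSection


section ConeExtend

variable {G K : Type} [AddGroup G] [PartialOrder G]
  [CovariantClass G G (· + ·) (· ≤ ·)]
  [CovariantClass G G (Function.swap (· + ·)) (· ≤ ·)]
  [AddGroup K]

lemma cone_sub_eq {A S B : K} : (A + S) - (B + S) = A - B := by
  simp [sub_eq_add_neg, neg_add_rev, add_assoc]

lemma cone_mono (f : G → K) (hf : ∀ a b : G, 0 ≤ a → 0 ≤ b → f (a + b) = f a + f b)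
    (g c e : G) (hc0 : 0 ≤ c) (hcg : g ≤ c) (hce : c ≤ e) :
    f e - f (-g + e) = f c - f (-g + c) := by
  set s := -c + e with hs_def
  have hs : 0 ≤ s := by
    rw [hs_def, le_neg_add_iff_add_le, add_zero]; exact hce
  have h1 : c + s = e := add_neg_cancel_left c e
  have h2 : (-g + c) + s = -g + e := by
    rw [add_assoc, add_neg_cancel_left]
  have hgc : 0 ≤ -g + c := by
    rw [le_neg_add_iff_add_le, add_zero]; exact hcg
  have e1 : f e = f c + f s := by rw [← h1]; exact hf c s hc0 hs
  have e2 : f (-g + e) = f (-g + c) + f s := by rw [← h2]; exact hf _ s hgc hs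
  rw [e1, e2, cone_sub_eq]

lemma cone_indep (f : G → K) (hf : ∀ a b : G, 0 ≤ a → 0 ≤ b → f (a + b) = f a + f b)
    (hdir : ∀ a b : G, ∃ c : G, a ≤ c ∧ b ≤ c)
    (g c d : G) (hc0 : 0 ≤ c) (hcg : g ≤ c) (hd0 : 0 ≤ d) (hdg : g ≤ d) :
    f c - f (-g + c) = f d - f (-g + d) := by
  obtain ⟨e, hce, hde⟩ := hdir c d
  rw [← cone_mono f hf g c e hc0 hcg hce, ← cone_mono f hf g d e hd0 hdg hde]

lemma cone_extend (hdir : ∀ a b : G, ∃ c : G, a ≤ c ∧ b ≤ c)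
    (f : G → K) (hf : ∀ a b : G, 0 ≤ a → 0 ≤ b → f (a + b) = f a + f b) :
    ∃ F : G → K, (∀ x y : G, F (x + y) = F x + F y) ∧
      (∀ g : G, 0 ≤ g → F g = f g) ∧
      (∀ g : G, ∃ c d : G, 0 ≤ c ∧ 0 ≤ d ∧ F g = f c - f d) := by
  have hf0 : f 0 = 0 := by
    have h0 := hf 0 0 le_rfl le_rfl
    rw [add_zero] at h0
    exact left_eq_add.mp h0
  -- choice of an upper bound
  have hch : ∀ g : G, ∃ c : G, g ≤ c ∧ 0 ≤ c := fun g => hdir g 0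
  choose c hc1 hc2 using hch
  set F : G → K := fun g => f (c g) - f (-g + c g) with hF
  have key : ∀ (g d : G), 0 ≤ d → g ≤ d → F g = f d - f (-g + d) := by
    intro g d hd0 hdg
    exact cone_indep f hf hdir g (c g) d (hc2 g) (hc1 g) hd0 hdg
  have hpos : ∀ g : G, 0 ≤ g → F g = f g := by
    intro g hg
    rw [key g g hg le_rfl, neg_add_cancel, hf0, sub_zero]
  refine ⟨F, ?_, hpos, ?_⟩
  · intro g h
    obtain ⟨b0, hb1, hb2⟩ := hdir h (-g)
    obtain ⟨b, hb3, hb4⟩ := hdir b0 0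
    have hbh : h ≤ b := le_trans hb1 hb3
    have hbg : -g ≤ b := le_trans hb2 hb3
    have ha0 : (0:G) ≤ g + b := by
      have := add_le_add_right hbg g
      rwa [add_neg_cancel] at this
    have hag : g ≤ g + b := by
      have := add_le_add_right hb4 g
      rwa [add_zero] at this
    have hagh : g + h ≤ g + b := add_le_add_right hbh g
    have eg : F g = f (g + b) - f b := by
      rw [key g (g + b) ha0 hag, neg_add_cancel_left]
    have eh : F h = f b - f (-h + b) := key h b hb4 hbh
    have egh : F (g + h) = f (g + b) - f (-h + b) := by
      rw [key (g + h) (g + b) ha0 hagh]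
      congr 1
      rw [neg_add_rev, add_assoc, neg_add_cancel_left]
    rw [eg, eh, egh]
    simp [sub_eq_add_neg, add_assoc]
  · intro g
    exact ⟨c g, -g + c g, hc2 g, by rw [le_neg_add_iff_add_le, add_zero]; exact hc1 g, rfl⟩

end ConeExtend


section ZLexHelpers
variable {G : Type} [AddGroup G] [PartialOrder G]
  [CovariantClass G G (· + ·) (· ≤ ·)]
  [CovariantClass G G (Function.swap (· + ·)) (· ≤ ·)]

lemma zlex_add (i j : ℤ) (g h : G) :
    (ZLex.mk i g) + (ZLex.mk j h) = ZLex.mk (i + j) (g + h) := rfl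

lemma zlex_neg (i : ℤ) (g : G) : -(ZLex.mk i g) = ZLex.mk (-i) (-g) := rfl

lemma zlex_sub (i j : ℤ) (g h : G) :
    (ZLex.mk i g) - (ZLex.mk j h) = ZLex.mk (i - j) (g - h) := by
  rw [sub_eq_add_neg, zlex_neg, zlex_add, ← sub_eq_add_neg, ← sub_eq_add_neg]

lemma zlex_ext {i j : ℤ} {g h : G} (h1 : i = j) (h2 : g = h) :
    ZLex.mk i g = ZLex.mk j h := by rw [h1, h2]

end ZLexHelpers

/-- `(ℤ ⃗× G, γ)`, with `γ` the inclusion of `Γ(ℤ ⃗× G, (n,0))`,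
is a universal group for `Γ(ℤ ⃗× G, (n,0))`: the image of `γ` generates
`ℤ ⃗× G`, and every group-valued measure on the PEA factors uniquely through
`γ` by a group homomorphism. -/
theorem stmt18 (G : Type) [AddGroup G] [PartialOrder G]
    [CovariantClass G G (· + ·) (· ≤ ·)]
    [CovariantClass G G (Function.swap (· + ·)) (· ≤ ·)]
    (hdir : ∀ a b : G, ∃ c : G, a ≤ c ∧ b ≤ c)
    (n : ℕ) (hn : 1 ≤ n)
    (P : PEA (GammaSet (ZLex.mk (n : ℤ) (0 : G))))
    (hP : P = GammaInterval.Gamma (ZLex.mk (n : ℤ) (0 : G)) (by exact Or.inl (show (0 : ℤ) < (n : ℤ) by exact_mod_cast hn))) :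
    AddSubgroup.closure
      (Set.range (fun x : GammaSet (ZLex.mk (n : ℤ) (0 : G)) => x.1)) = ⊤ ∧
    ∀ (K : Type) (_ : AddGroup K) (φ : GammaSet (ZLex.mk (n : ℤ) (0 : G)) → K),
      (∀ a b, P.D a b → φ (P.add a b) = φ a + φ b) →
      ∃! ψ : ZLex G →+ K,
        ∀ x : GammaSet (ZLex.mk (n : ℤ) (0 : G)), ψ x.1 = φ x := by
  subst hP
  classical
  set u : ZLex G := ZLex.mk (n : ℤ) (0 : G) with hu_def
  have hn' : (0 : ℤ) < (n : ℤ) := by exact_mod_cast hn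
  have h1n : (1 : ℤ) ≤ (n : ℤ) := by exact_mod_cast hn
  have le1 : ∀ m : G, m ≤ 0 → ZLex.mk 1 m ≤ u := by
    intro m hm
    rcases lt_or_eq_of_le h1n with h | h
    · exact Or.inl h
    · exact Or.inr ⟨h, hm⟩
  have memI0 : ∀ i : ℤ, 0 < i → i ≤ (n : ℤ) → ∀ g : G, g ≤ 0 →
      (0 : ZLex G) ≤ ZLex.mk i g ∧ ZLex.mk i g ≤ u := by
    intro i hi hin g hg
    refine ⟨Or.inl hi, ?_⟩
    rcases lt_or_eq_of_le hin with h | h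
    · exact Or.inl h
    · exact Or.inr ⟨h, hg⟩
  have mem0 : ∀ g : G, 0 ≤ g → (0 : ZLex G) ≤ ZLex.mk 0 g ∧ ZLex.mk 0 g ≤ u :=
    fun g hg => ⟨Or.inr ⟨rfl, hg⟩, Or.inl hn'⟩
  -- Part 1: the image generates
  have memIZ : ∀ (S : AddSubgroup (ZLex G)),
      (Set.range (fun x : GammaSet u => x.1)) ⊆ S → ∀ i : ℤ, ZLex.mk i 0 ∈ S := by
    intro S hS i
    have mem1 : ZLex.mk 1 0 ∈ S :=
      hS ⟨⟨ZLex.mk 1 0, Or.inl Int.one_pos, le1 0 le_rfl⟩, rfl⟩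
    induction i using Int.induction_on with
    | zero =>
      have h0 : ZLex.mk 0 0 = (0 : ZLex G) := rfl
      rw [h0]; exact zero_mem S
    | succ i ih =>
      have h : ZLex.mk (i + 1) (0 : G) = ZLex.mk i 0 + ZLex.mk 1 0 := by
        rw [zlex_add]; exact zlex_ext rfl (add_zero (0 : G)).symm
      rw [h]; exact add_mem ih mem1
    | pred i ih =>
      have h : ZLex.mk (-i - 1) (0 : G) = ZLex.mk (-i) 0 - ZLex.mk 1 0 := by
        rw [zlex_sub]; exact zlex_ext rfl (sub_zero (0 : G)).symm
      rw [h]; exact sub_mem ih mem1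
  have part1 : AddSubgroup.closure
      (Set.range (fun x : GammaSet u => x.1)) = ⊤ := by
    rw [eq_top_iff]
    intro x _
    set S := AddSubgroup.closure (Set.range (fun x : GammaSet u => x.1)) with hS_def
    have hS : (Set.range (fun x : GammaSet u => x.1)) ⊆ S := AddSubgroup.subset_closure
    have mem0S : ∀ g : G, 0 ≤ g → ZLex.mk 0 g ∈ S := by
      intro g hg
      exact hS ⟨⟨ZLex.mk 0 g, (mem0 g hg).1, (mem0 g hg).2⟩, rfl⟩
    obtain ⟨i, g⟩ := x
    obtain ⟨c, hgc, hc0⟩ := hdir g 0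
    have hcg0 : (0 : G) ≤ -g + c := by
      have := add_le_add_right hgc (-g)
      rwa [neg_add_cancel] at this
    have hrep : (⟨i, g⟩ : ZLex G) =
        ZLex.mk i 0 + ZLex.mk 0 c - ZLex.mk 0 (-g + c) := by
      show ZLex.mk i g = ZLex.mk i 0 + ZLex.mk 0 c - ZLex.mk 0 (-g + c)
      rw [zlex_add, zlex_sub]
      refine zlex_ext (by ring) ?_
      rw [zero_add, sub_eq_add_neg, neg_add_rev, neg_neg, add_neg_cancel_left]
    rw [hrep]
    exact sub_mem (add_mem (memIZ S hS i) (mem0S c hc0)) (mem0S _ hcg0)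
  refine ⟨part1, ?_⟩
  intro K instK φ hφ
  -- basic facts about the PEA operations
  have hadd : ∀ (hu0 : (0 : ZLex G) ≤ u) (a b : GammaSet u)
      (h : GammaInterval.gD u a b),
      (GammaInterval.Gamma u hu0).add a b
        = (⟨a.1 + b.1, add_nonneg a.2.1 b.2.1, h⟩ : GammaSet u) := by
    intro hu0 a b h
    exact Subtype.ext (GammaInterval.gadd_val u hu0 h)
  have φadd : ∀ (a b c : GammaSet u), a.1 + b.1 = c.1 → φ c = φ a + φ b := by
    intro a b c hc
    have hD' : GammaInterval.gD u a b := by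
      show a.1 + b.1 ≤ u
      rw [hc]; exact c.2.2
    have h2 := hφ a b hD'
    rw [hadd _ a b hD'] at h2
    have h3 : (⟨a.1 + b.1, add_nonneg a.2.1 b.2.1, hD'⟩ : GammaSet u) = c :=
      Subtype.ext hc
    rwa [h3] at h2
  -- the cone measure f and its extension F
  set f : G → K := fun g =>
    if hg : (0 : G) ≤ g then φ ⟨ZLex.mk 0 g, (mem0 g hg).1, (mem0 g hg).2⟩ else 0
    with hf_def
  have hfval : ∀ (g : G) (hg : 0 ≤ g) (p1 : (0:ZLex G) ≤ ZLex.mk 0 g)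
      (p2 : ZLex.mk 0 g ≤ u), f g = φ ⟨ZLex.mk 0 g, p1, p2⟩ := by
    intro g hg p1 p2
    rw [hf_def]
    simp only [dif_pos hg]
  have hfadd : ∀ a b : G, 0 ≤ a → 0 ≤ b → f (a + b) = f a + f b := by
    intro a b ha hb
    have hab : (0 : G) ≤ a + b := add_nonneg ha hb
    rw [hfval a ha (mem0 a ha).1 (mem0 a ha).2,
      hfval b hb (mem0 b hb).1 (mem0 b hb).2,
      hfval (a + b) hab (mem0 _ hab).1 (mem0 _ hab).2]
    refine φadd _ _ _ ?_
    show ZLex.mk 0 a + ZLex.mk 0 b = ZLex.mk 0 (a + b)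
    rw [zlex_add]; exact zlex_ext (by ring) rfl
  obtain ⟨F, hFadd, hFpos, hFrep⟩ := cone_extend hdir f hfadd
  have hF0 : F 0 = 0 := by
    have := hFadd 0 0
    rw [add_zero] at this
    exact left_eq_add.mp this
  have hFneg : ∀ g : G, F (-g) = -F g := by
    intro g
    have := hFadd g (-g)
    rw [add_neg_cancel, hF0] at this
    exact (neg_eq_of_add_eq_zero_right this.symm).symm
  -- the element e = φ(1,0) and commutation
  set oneE : GammaSet u := ⟨ZLex.mk 1 0, Or.inl Int.one_pos, le1 0 le_rfl⟩
    with honeE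
  set e : K := φ oneE with he_def
  have comm_f : ∀ g : G, 0 ≤ g → e + f g = f g + e := by
    intro g hg
    have hng : -g ≤ (0 : G) := neg_nonpos.mpr hg
    set x : GammaSet u := ⟨ZLex.mk 1 (-g), Or.inl Int.one_pos, le1 _ hng⟩ with hx
    set a : GammaSet u := ⟨ZLex.mk 0 g, (mem0 g hg).1, (mem0 g hg).2⟩ with ha
    have h1 : φ oneE = φ a + φ x := by
      refine φadd a x oneE ?_
      show ZLex.mk 0 g + ZLex.mk 1 (-g) = ZLex.mk 1 0
      rw [zlex_add]; exact zlex_ext (by ring) (add_neg_cancel g)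
    have h2 : φ oneE = φ x + φ a := by
      refine φadd x a oneE ?_
      show ZLex.mk 1 (-g) + ZLex.mk 0 g = ZLex.mk 1 0
      rw [zlex_add]; exact zlex_ext (by ring) (neg_add_cancel g)
    have hfg : f g = φ a := hfval g hg (mem0 g hg).1 (mem0 g hg).2
    rw [hfg, he_def, h1]
    calc φ a + φ x + φ a = φ a + (φ x + φ a) := by rw [add_assoc]
      _ = φ a + (φ a + φ x) := by rw [← h1, ← h2]
  have comm_F : ∀ g : G, AddCommute e (F g) := by
    intro g
    obtain ⟨c, d, hc0, hd0, hrep⟩ := hFrep g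
    have h1 : AddCommute e (f c) := comm_f c hc0
    have h2 : AddCommute e (f d) := comm_f d hd0
    rw [hrep]
    rw [sub_eq_add_neg]
    exact h1.add_right h2.neg_right
  -- the homomorphism ψ
  have ψadd : ∀ x y : ZLex G,
      (ZLex.idx (x + y)) • e + F (ZLex.snd (x + y)) =
      ((ZLex.idx x) • e + F (ZLex.snd x)) + ((ZLex.idx y) • e + F (ZLex.snd y)) := by
    intro x y
    have hix : ZLex.idx (x + y) = ZLex.idx x + ZLex.idx y := rfl
    have hsx : ZLex.snd (x + y) = ZLex.snd x + ZLex.snd y := rfl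
    rw [hix, hsx, add_zsmul, hFadd]
    have hc : (ZLex.idx y) • e + F (ZLex.snd x) =
        F (ZLex.snd x) + (ZLex.idx y) • e :=
      ((comm_F (ZLex.snd x)).zsmul_left (ZLex.idx y)).eq
    rw [add_assoc, add_assoc, ← add_assoc ((ZLex.idx y) • e), hc, add_assoc]
  set ψ : ZLex G →+ K :=
    AddMonoidHom.mk' (fun x => (ZLex.idx x) • e + F (ZLex.snd x)) ψadd with hψ_def
  have ψval : ∀ x : ZLex G, ψ x = (ZLex.idx x) • e + F (ZLex.snd x) := fun _ => rfl
  -- φ on elements (1, m) with m ≤ 0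
  have φ1 : ∀ (m : G) (hm : m ≤ 0) (p1 : (0:ZLex G) ≤ ZLex.mk 1 m)
      (p2 : ZLex.mk 1 m ≤ u), φ ⟨ZLex.mk 1 m, p1, p2⟩ = e + F m := by
    intro m hm p1 p2
    have hnm : (0 : G) ≤ -m := neg_nonneg.mpr hm
    have h1 : φ oneE = φ ⟨ZLex.mk 1 m, p1, p2⟩ +
        φ ⟨ZLex.mk 0 (-m), (mem0 _ hnm).1, (mem0 _ hnm).2⟩ := by
      refine φadd _ _ _ ?_
      show ZLex.mk 1 m + ZLex.mk 0 (-m) = ZLex.mk 1 0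
      rw [zlex_add]; exact zlex_ext (by ring) (add_neg_cancel m)
    have h2 : φ ⟨ZLex.mk 0 (-m), (mem0 _ hnm).1, (mem0 _ hnm).2⟩ = F (-m) := by
      rw [hFpos _ hnm]
      exact (hfval (-m) hnm (mem0 _ hnm).1 (mem0 _ hnm).2).symm
    have h3 : φ ⟨ZLex.mk 1 m, p1, p2⟩ = e - F (-m) := by
      rw [← h2, he_def]
      exact eq_sub_of_add_eq h1.symm
    rw [h3, hFneg, sub_neg_eq_add]
  -- main computation by induction on the integer part
  have main : ∀ (k : ℕ) (g : G) (p1 : (0:ZLex G) ≤ ZLex.mk (k : ℤ) g)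
      (p2 : ZLex.mk (k : ℤ) g ≤ u),
      φ ⟨ZLex.mk (k : ℤ) g, p1, p2⟩ = (k : ℤ) • e + F g := by
    intro k
    induction k with
    | zero =>
      intro g p1 p2
      have hg : (0 : G) ≤ g := by
        rcases p1 with h | ⟨_, h⟩
        · exact absurd h (lt_irrefl 0)
        · exact h
      have h0 : φ ⟨ZLex.mk ((0 : ℕ) : ℤ) g, p1, p2⟩ = f g := by
        rw [hfval g hg (by exact_mod_cast p1) (by exact_mod_cast p2)]
        rfl
      rw [h0, hFpos g hg]
      simp
    | succ k ih =>
      intro g p1 p2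
      have hkn : ((k : ℤ) + 1) ≤ (n : ℤ) := by
        rcases p2 with h | ⟨h, _⟩
        · have h' : ((k + 1 : ℕ) : ℤ) < (n : ℤ) := h
          push_cast at h'
          omega
        · have h' : ((k + 1 : ℕ) : ℤ) = (n : ℤ) := h
          push_cast at h'
          omega
      obtain ⟨c, hgc, hc0⟩ := hdir g 0
      have hm : -c + g ≤ 0 := by
        have := add_le_add_right hgc (-c)
        rwa [neg_add_cancel] at this
      have memA1 : (0 : ZLex G) ≤ ZLex.mk (k : ℤ) c := by
        rcases Nat.eq_zero_or_pos k with h | h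
        · exact Or.inr ⟨show (0 : ℤ) = (k : ℤ) by exact_mod_cast h.symm, hc0⟩
        · exact Or.inl (show (0 : ℤ) < (k : ℤ) by exact_mod_cast h)
      have memA2 : ZLex.mk (k : ℤ) c ≤ u :=
        Or.inl (show (k : ℤ) < (n : ℤ) by omega)
      set A : GammaSet u := ⟨ZLex.mk (k : ℤ) c, memA1, memA2⟩ with hA
      set B : GammaSet u := ⟨ZLex.mk 1 (-c + g), Or.inl Int.one_pos, le1 _ hm⟩
        with hB
      have hsum : φ ⟨ZLex.mk ((k + 1 : ℕ) : ℤ) g, p1, p2⟩ = φ A + φ B := by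
        refine φadd A B _ ?_
        show ZLex.mk (k : ℤ) c + ZLex.mk 1 (-c + g) = ZLex.mk ((k + 1 : ℕ) : ℤ) g
        rw [zlex_add]
        exact zlex_ext (by push_cast; ring) (add_neg_cancel_left c g)
      have hA_val : φ A = (k : ℤ) • e + F c := ih c memA1 memA2
      have hB_val : φ B = e + F (-c + g) := φ1 _ hm (Or.inl Int.one_pos) (le1 _ hm)
      have hFg : F c + F (-c + g) = F g := by
        rw [← hFadd, add_neg_cancel_left]
      have hcomm : F c + e = e + F c := ((comm_F c).symm).eq
      rw [hsum, hA_val, hB_val]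
      push_cast
      rw [add_zsmul, one_zsmul]
      calc (k : ℤ) • e + F c + (e + F (-c + g))
          = (k : ℤ) • e + (F c + e) + F (-c + g) := by
            simp only [add_assoc]
        _ = (k : ℤ) • e + (e + F c) + F (-c + g) := by rw [hcomm]
        _ = ((k : ℤ) • e + e) + (F c + F (-c + g)) := by
            simp only [add_assoc]
        _ = ((k : ℤ) • e + e) + F g := by rw [hFg]
  have agree : ∀ x : GammaSet u, ψ x.1 = φ x := by
    rintro ⟨⟨i, g⟩, p1, p2⟩
    have hi0 : 0 ≤ i := by
      rcases p1 with h | ⟨h, _⟩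
      · exact le_of_lt h
      · exact le_of_eq h
    obtain ⟨k, rfl⟩ : ∃ k : ℕ, i = (k : ℤ) := ⟨i.toNat, (Int.toNat_of_nonneg hi0).symm⟩
    rw [ψval]
    exact (main k g p1 p2).symm
  refine ⟨ψ, agree, ?_⟩
  intro ψ' hψ'
  refine AddMonoidHom.eq_of_eqOn_dense part1 ?_
  rintro _ ⟨x, rfl⟩
  show ψ' x.1 = ψ x.1
  rw [hψ' x, agree x]
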